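/- In Z[R_8], the quotient of the additive subgroup generated by u_4 = e_4 + 2e_6 and u_6 = 4e_6 by the subgroup generated by 2u_4 - u_6 = 2e_4 and 2u_6 = 8e_6 is isomorphic to Z/4. -/
import Mathlib


/-- Dihedral quandle operation on `ZMod n`: `a · b = 2b - a`. -/
def dq (n : ℕ) (a b : ZMod n) : ZMod n := 2 * b - a

/-- Quandle ring multiplication on `ℤ[R_n] = ZMod n →₀ ℤ`. -/
noncomputable def qmul (n : ℕ) (x y : ZMod n →₀ ℤ) : ZMod n →₀ ℤ :=
  x.sum fun a r => y.sum fun b s => Finsupp.single (dq n a b) (r * s)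

/-- Augmentation map. -/
noncomputable def aug (n : ℕ) : (ZMod n →₀ ℤ) →ₗ[ℤ] ℤ :=
  Finsupp.lsum ℤ fun _ => LinearMap.id

/-- `e i = a_i - a_0`. -/
noncomputable def e (n : ℕ) (i : ZMod n) : ZMod n →₀ ℤ :=
  Finsupp.single i 1 - Finsupp.single 0 1

/-- Augmentation ideal. -/
noncomputable def Δ (n : ℕ) : Submodule ℤ (ZMod n →₀ ℤ) := LinearMap.ker (aug n)

noncomputable def Δ2 (n : ℕ) : Submodule ℤ (ZMod n →₀ ℤ) :=
  Submodule.span ℤ {z | ∃ x ∈ Δ n, ∃ y ∈ Δ n, z = qmul n x y}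

noncomputable def Δ3 (n : ℕ) : Submodule ℤ (ZMod n →₀ ℤ) :=
  Submodule.span ℤ {z | ∃ x ∈ Δ2 n, ∃ y ∈ Δ n, z = qmul n x y}

/-- The map `(a,b) ↦ a + 2b : ZMod 4`. -/
noncomputable def ψ : (ℤ × ℤ) →ₗ[ℤ] ZMod 4 :=
  (LinearMap.toSpanSingleton ℤ (ZMod 4) 1).coprod (LinearMap.toSpanSingleton ℤ (ZMod 4) 2)

lemma ψ_apply (a b : ℤ) : ψ (a, b) = (a : ZMod 4) + 2 * b := by
  simp [ψ, LinearMap.toSpanSingleton, LinearMap.smulRight]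
  ring

lemma ψ_surj : Function.Surjective ψ := by
  intro c
  refine ⟨((c.val : ℤ), 0), ?_⟩
  rw [ψ_apply]
  push_cast
  simp [ZMod.natCast_val, ZMod.cast_id]

noncomputable def K : Submodule ℤ (ℤ × ℤ) := Submodule.span ℤ {((2:ℤ), (-1:ℤ)), ((0:ℤ), (2:ℤ))}

lemma ker_ψ : LinearMap.ker ψ = K := by
  apply le_antisymm
  · rintro ⟨a, b⟩ hm
    have h : ((a + 2 * b : ℤ) : ZMod 4) = 0 := by
      have := (LinearMap.mem_ker).mp hm
      rw [ψ_apply] at this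
      push_cast
      rw [this]
    rw [ZMod.intCast_zmod_eq_zero_iff_dvd] at h
    obtain ⟨t, ht⟩ := h
    have key : ((a, b) : ℤ × ℤ) = (2*t - b) • ((2:ℤ), (-1:ℤ)) + t • ((0:ℤ), (2:ℤ)) := by
      simp [Prod.ext_iff]
      constructor <;> omega
    rw [key]
    exact Submodule.add_mem _
      (Submodule.smul_mem _ _ (Submodule.subset_span (by simp)))
      (Submodule.smul_mem _ _ (Submodule.subset_span (by simp)))
  · rw [K, Submodule.span_le]
    rintro x (rfl | rfl) <;> simp [SetLike.mem_coe, LinearMap.mem_ker, ψ_apply] <;> decide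

/-- With `u₄ = e₄ + 2e₆`, `u₆ = 4e₆`: the quotient of `span {u₄, u₆}` by
`span {2u₄ - u₆, 2u₆}` is isomorphic to `ℤ/4`. -/
theorem stmt_16 :
    let u4 : ZMod 8 →₀ ℤ := e 8 4 + (2 : ℤ) • e 8 6
    let u6 : ZMod 8 →₀ ℤ := (4 : ℤ) • e 8 6
    let N : Submodule ℤ (ZMod 8 →₀ ℤ) := Submodule.span ℤ {u4, u6}
    let M : Submodule ℤ (ZMod 8 →₀ ℤ) :=
      Submodule.span ℤ {(2 : ℤ) • u4 - u6, (2 : ℤ) • u6}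
    Nonempty ((N ⧸ M.comap N.subtype) ≃ₗ[ℤ] ZMod 4) := by
  intro u4 u6 N M
  set g : (ℤ × ℤ) →ₗ[ℤ] (ZMod 8 →₀ ℤ) :=
    (LinearMap.toSpanSingleton ℤ _ u4).coprod (LinearMap.toSpanSingleton ℤ _ u6) with hg
  have g_apply : ∀ a b : ℤ, g (a, b) = a • u4 + b • u6 := by
    intro a b; simp [hg, LinearMap.toSpanSingleton, LinearMap.smulRight]
  have hrange : LinearMap.range g = N := by
    rw [hg, LinearMap.range_coprod, ← LinearMap.span_singleton_eq_range,
      ← LinearMap.span_singleton_eq_range, ← Submodule.span_union]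
    rfl
  have ginj : Function.Injective g := by
    rw [← LinearMap.ker_eq_bot, eq_bot_iff]
    rintro ⟨a, b⟩ hm
    have h : a • u4 + b • u6 = 0 := by rw [← g_apply]; exact hm
    have h4 := congrArg (fun x : ZMod 8 →₀ ℤ => x 4) h
    have h6 := congrArg (fun x : ZMod 8 →₀ ℤ => x 6) h
    simp (config := {decide := true}) [u4, u6, e, Finsupp.single_apply] at h4 h6
    simp [Submodule.mem_bot, Prod.ext_iff]
    omega
  set f : (ℤ × ℤ) ≃ₗ[ℤ] N :=
    LinearEquiv.ofBijective (g.codRestrict N (fun x => hrange ▸ LinearMap.mem_range_self g x))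
      ⟨fun x y hxy => ginj (congrArg Subtype.val hxy), by
        rintro ⟨y, hy⟩
        rw [← hrange] at hy
        obtain ⟨x, hx⟩ := hy
        exact ⟨x, Subtype.ext hx⟩⟩ with hf
  have hmap : K.map (f : (ℤ × ℤ) →ₗ[ℤ] N) = M.comap N.subtype := by
    apply Submodule.map_injective_of_injective N.injective_subtype
    rw [Submodule.map_comap_subtype, ← Submodule.map_comp]
    have hcomp : N.subtype ∘ₗ (f : (ℤ × ℤ) →ₗ[ℤ] N) = g := by
      ext x <;> rfl
    rw [hcomp]
    have hMN : M ≤ N := by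
      rw [Submodule.span_le]
      rintro x (rfl | rfl)
      · exact N.sub_mem (N.smul_mem _ (Submodule.subset_span (by simp)))
          (Submodule.subset_span (by simp))
      · exact N.smul_mem _ (Submodule.subset_span (by simp))
    rw [inf_eq_right.mpr hMN, K, Submodule.map_span]
    congr 1
    rw [Set.image_insert_eq, Set.image_singleton, g_apply, g_apply]
    simp [sub_eq_add_neg]
  exact ⟨(Submodule.Quotient.equiv K (M.comap N.subtype) f hmap).symm.trans
    ((Submodule.quotEquivOfEq K (LinearMap.ker ψ) ker_ψ.symm).trans
      (ψ.quotKerEquivOfSurjective ψ_surj))⟩
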